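/- Let X and U be two distinct three-element sets of nonempty words over Σ that are the bases of 3-maximal submonoids X* and U* of Σ*, and let Z = X ∪ U. Then there is no set Y ⊆ Σ* of cardinality at most 3 with Z ⊆ Y* (equivalently, the free rank of Z is greater than 3). -/

import Mathlib

/-- The basis of a submonoid `M` of the free monoid `Σ*`: `(M \ {ε}) \ (M \ {ε})²`. -/
def basisOf {α : Type*} (M : Submonoid (FreeMonoid α)) : Set (FreeMonoid α) :=
  ((M : Set (FreeMonoid α)) \ {1}) \
    {w | ∃ u ∈ (M : Set (FreeMonoid α)) \ {1}, ∃ v ∈ (M : Set (FreeMonoid α)) \ {1}, w = u * v}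

/-- A submonoid of `Σ*` is `k`-maximal if its rank (cardinality of its basis) is at most `k`
and it is maximal (w.r.t. inclusion) among submonoids of rank at most `k`. -/
def IsKMaximal {α : Type*} (k : ℕ) (M : Submonoid (FreeMonoid α)) : Prop :=
  (basisOf M).Finite ∧ (basisOf M).ncard ≤ k ∧
    ∀ M' : Submonoid (FreeMonoid α),
      (basisOf M').Finite → (basisOf M').ncard ≤ k → M ≤ M' → M = M'

lemma basisOf_closure_subset {α : Type*} (Y : Set (FreeMonoid α)) :
    basisOf (Submonoid.closure Y) ⊆ Y := by
  intro w hw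
  obtain ⟨⟨hwM, hw1⟩, hwnp⟩ := hw
  obtain ⟨l, hl, hprod⟩ := Submonoid.exists_list_of_mem_closure hwM
  simp only [Set.mem_setOf_eq] at hwnp
  clear hwM
  induction l with
  | nil => exact absurd hprod.symm hw1
  | cons a t ih =>
    have haY : a ∈ Y := hl a List.mem_cons_self
    have htY : ∀ y ∈ t, y ∈ Y := fun y hy => hl y (List.mem_cons_of_mem a hy)
    by_cases ha1 : a = 1
    · rw [List.prod_cons, ha1, one_mul] at hprod
      exact ih htY hprod
    · by_cases ht1 : t.prod = 1
      · rw [List.prod_cons, ht1, mul_one] at hprod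
        rwa [← hprod]
      · exfalso
        apply hwnp
        refine ⟨a, ⟨Submonoid.subset_closure haY, ha1⟩, t.prod,
          ⟨?_, ht1⟩, by rw [← hprod, List.prod_cons]⟩
        exact Submonoid.list_prod_mem _ (fun y hy => Submonoid.subset_closure (htY y hy))

/-- If `X` and `U` are bases of two distinct 3-maximal submonoids, then `Z = X ∪ U`
is not contained in `Y*` for any set `Y` of cardinality at most 3 (the free rank of
`Z` is greater than 3). -/
theorem free_rank_of_union_gt_three {α : Type*} (X U : Set (FreeMonoid α))
    (hXne : ∀ w ∈ X, w ≠ 1) (hUne : ∀ w ∈ U, w ≠ 1)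
    (hX3 : X.ncard = 3) (hU3 : U.ncard = 3) (hXU : X ≠ U)
    (hXbasis : basisOf (Submonoid.closure X) = X)
    (hUbasis : basisOf (Submonoid.closure U) = U)
    (hXmax : IsKMaximal 3 (Submonoid.closure X))
    (hUmax : IsKMaximal 3 (Submonoid.closure U)) :
    ¬ ∃ Y : Set (FreeMonoid α), Y.Finite ∧ Y.ncard ≤ 3 ∧
        X ∪ U ⊆ (Submonoid.closure Y : Set (FreeMonoid α)) := by
  rintro ⟨Y, hYfin, hY3, hsub⟩
  have hb := basisOf_closure_subset Y
  have hbfin : (basisOf (Submonoid.closure Y)).Finite := hYfin.subset hb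
  have hbcard : (basisOf (Submonoid.closure Y)).ncard ≤ 3 :=
    le_trans (Set.ncard_le_ncard hb hYfin) hY3
  have hXle : Submonoid.closure X ≤ Submonoid.closure Y :=
    Submonoid.closure_le.mpr (fun x hx => hsub (Set.mem_union_left _ hx))
  have hUle : Submonoid.closure U ≤ Submonoid.closure Y :=
    Submonoid.closure_le.mpr (fun x hx => hsub (Set.mem_union_right _ hx))
  have hX := hXmax.2.2 _ hbfin hbcard hXle
  have hU := hUmax.2.2 _ hbfin hbcard hUle
  apply hXU
  rw [← hXbasis, ← hUbasis, hX, hU]
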